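/- arXiv:1112.1045 — 2 statements merged into one kernel-verified Lean document; each statement's English description precedes it below -/
import Mathlib

section
/- Let r, n1, k, s, ℓ be natural numbers with ℓ > r, let ε ∈ (0,1), and set n2 = (r+1)(s+1). Fix an injective map ι : {0,1}^s → GF(2^{s+1}) \ {0} and a fixed F_2-linear identification of GF(2^{s+1}) with F_2^{s+1}, and define Enc_r : {0,1}^s → F_2^{n2} by Enc_r(y) = (ι(y), ι(y)³, ι(y)⁵, ..., ι(y)^{2r+1}). Suppose f : {0,1}^{n1} → F_2^{n2} is such that for every (n1,k)-source X and every independent distribution W on F_2^{n2} with min-entropy at least n2/(r+1) − ℓ, the bit ⟨f(X), W⟩ (inner product over F_2) is ε-close to uniform. Then the function nmExt : {0,1}^{n1} × {0,1}^s → {0,1} defined by nmExt(x,y) = ⟨f(x), Enc_r(y)⟩ is an (r, k, ε')-non-malleable extractor with ε' ≤ (r+1)·2^{r+4}·2^{−ℓ} + 2^{(3r+2)/2}·ε. -/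
open Finset
open scoped Classical

noncomputable section

abbrev BS (n : ℕ) := Fin n → Bool

def uniformD (α : Type*) [Fintype α] : α → ℝ := fun _ => (Fintype.card α : ℝ)⁻¹

def prodD {α β : Type*} (p : α → ℝ) (q : β → ℝ) : α × β → ℝ := fun z => p z.1 * q z.2

def pushD {α β : Type*} [Fintype α] (f : α → β) (p : α → ℝ) : β → ℝ :=
  fun b => ∑ a, if f a = b then p a else 0

def SD {α : Type*} [Fintype α] (p q : α → ℝ) : ℝ := (∑ a, |p a - q a|) / 2

def IsDist {α : Type*} [Fintype α] (p : α → ℝ) : Prop := (∀ a, 0 ≤ p a) ∧ ∑ a, p a = 1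

def mEntGe {α : Type*} (p : α → ℝ) (k : ℝ) : Prop := ∀ a, p a ≤ (2:ℝ) ^ (-k)

def IsNME {X Y M : Type*} [Fintype X] [Fintype Y] [Fintype M]
    (E : X → Y → M) (k ε : ℝ) : Prop :=
  ∀ μX : X → ℝ, IsDist μX → mEntGe μX k →
    ∀ A : Y → Y, (∀ y, A y ≠ y) →
      SD (pushD (fun xy : X × Y => (E xy.1 xy.2, E xy.1 (A xy.2), xy.2)) (prodD μX (uniformD Y)))
         (prodD (uniformD M)
           (pushD (fun xy : X × Y => (E xy.1 (A xy.2), xy.2)) (prodD μX (uniformD Y)))) ≤ ε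

def IsNMEr {X Y M : Type*} [Fintype X] [Fintype Y] [Fintype M]
    (r : ℕ) (E : X → Y → M) (k ε : ℝ) : Prop :=
  ∀ μX : X → ℝ, IsDist μX → mEntGe μX k →
    ∀ A : Fin r → Y → Y, (∀ i y, A i y ≠ y) →
      SD (pushD (fun xy : X × Y =>
            (E xy.1 xy.2, fun i => E xy.1 (A i xy.2), xy.2)) (prodD μX (uniformD Y)))
         (prodD (uniformD M)
           (pushD (fun xy : X × Y =>
             ((fun i => E xy.1 (A i xy.2)), xy.2)) (prodD μX (uniformD Y)))) ≤ ε

/-- The inner product over `F_2` on `F_2^{r·s}` represented in `r` blocks of length `s`. -/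
def ipBlocks {r s : ℕ} (v w : Fin r → Fin s → ZMod 2) : ZMod 2 :=
  ∑ j, ∑ i, v j i * w j i

namespace S10

def chi (b : ZMod 2) : ℝ := if b = 0 then 1 else -1

lemma zmod2_cases (a : ZMod 2) : a = 0 ∨ a = 1 := by revert a; decide

lemma chi_zero : chi 0 = 1 := if_pos rfl
lemma chi_one : chi 1 = -1 := by norm_num [chi]

lemma chi_add (a b : ZMod 2) : chi (a + b) = chi a * chi b := by
  rcases zmod2_cases a with rfl | rfl <;> rcases zmod2_cases b with rfl | rfl <;>
    simp [chi, show (1+1 : ZMod 2) = 0 by decide] <;> norm_num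

lemma abs_chi (b : ZMod 2) : |chi b| = 1 := by
  rcases zmod2_cases b with rfl | rfl <;> norm_num [chi]

lemma chi_add_one (a : ZMod 2) : chi (a + 1) = - chi a := by
  rw [chi_add, chi_one]; ring

lemma sum_zmod2 (g : ZMod 2 → ℝ) : ∑ b, g b = g 0 + g 1 := by
  rw [show (univ : Finset (ZMod 2)) = {0, 1} by decide]
  rw [Finset.sum_insert (by decide), Finset.sum_singleton]

lemma sum_g_pushD {α β : Type*} [Fintype α] [Fintype β] (F : α → β) (p : α → ℝ) (g : β → ℝ) :
    ∑ b, g b * pushD F p b = ∑ a, g (F a) * p a := by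
  calc ∑ b, g b * pushD F p b
      = ∑ b, ∑ a, (if F a = b then g b * p a else 0) := by
        refine Finset.sum_congr rfl fun b _ => ?_
        rw [pushD, Finset.mul_sum]
        exact Finset.sum_congr rfl fun a _ => by rw [mul_ite, mul_zero]
    _ = ∑ a, ∑ b, (if F a = b then g b * p a else 0) := Finset.sum_comm
    _ = ∑ a, g (F a) * p a := by
        refine Finset.sum_congr rfl fun a _ => ?_
        rw [Finset.sum_ite_eq]
        simp

lemma chi_orth {r : ℕ} (u : Fin r → ZMod 2) :
    ∑ t : Fin r → ZMod 2, chi (∑ i, t i * u i) = if u = 0 then ((2:ℝ)^r) else 0 := by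
  by_cases hu : u = 0
  · subst hu
    rw [if_pos rfl]
    have : ∀ t : Fin r → ZMod 2, chi (∑ i, t i * (0 : Fin r → ZMod 2) i) = 1 := by
      intro t; simp [chi]
    rw [Finset.sum_congr rfl fun t _ => this t, Finset.sum_const, nsmul_eq_mul, mul_one]
    simp [Fintype.card_fun]
  · rw [if_neg hu]
    have hex : ∃ i, u i ≠ 0 := by
      by_contra h; push_neg at h; exact hu (funext fun i => h i)
    obtain ⟨i₀, hi₀⟩ := hex
    have hui : u i₀ = 1 := by rcases zmod2_cases (u i₀) with h | h; exact absurd h hi₀; exact h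
    have key : ∀ t : Fin r → ZMod 2,
        ∑ i, Function.update t i₀ (t i₀ + 1) i * u i = (∑ i, t i * u i) + 1 := by
      intro t
      have e1 : ∑ i, Function.update t i₀ (t i₀ + 1) i * u i
          = (t i₀ + 1) * u i₀ + ∑ i ∈ univ.erase i₀, t i * u i := by
        rw [← Finset.add_sum_erase _ _ (Finset.mem_univ i₀), Function.update_self]
        congr 1
        exact Finset.sum_congr rfl fun i hi => by
          rw [Function.update_of_ne (Finset.ne_of_mem_erase hi)]
      have e2 : ∑ i, t i * u i = t i₀ * u i₀ + ∑ i ∈ univ.erase i₀, t i * u i :=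
        (Finset.add_sum_erase _ _ (Finset.mem_univ i₀)).symm
      rw [e1, e2, hui]
      ring
    apply Finset.sum_involution (fun t _ => Function.update t i₀ (t i₀ + 1))
    · intro t _
      rw [key t, chi_add_one]
      ring
    · intro t _ _
      intro hcontra
      have := congrFun hcontra i₀
      rw [Function.update_self] at this
      exact (by decide : ∀ a : ZMod 2, a + 1 ≠ a) (t i₀) this
    · intro t _
      funext i
      by_cases h : i = i₀
      · subst h
        simp only [Function.update_self]
        rcases zmod2_cases (t i) with h|h <;> rw [h] <;> decide
      · rw [Function.update_of_ne h, Function.update_of_ne h]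
    · exact fun t _ => Finset.mem_univ _


theorem ana {n1 r s : ℕ} {Y : Type} [Fintype Y] [DecidableEq Y] [Nonempty Y]
    (f : BS n1 → Fin (r+1) → Fin (s+1) → ZMod 2)
    (μX : BS n1 → ℝ) (hXdist : IsDist μX)
    (E : BS n1 → Y → ZMod 2) (A : Fin r → Y → Y)
    (wvec : (Fin r → ZMod 2) → Y → (Fin (r+1) → Fin (s+1) → ZMod 2))
    (LIN : ∀ x y (t : Fin r → ZMod 2),
      E x y + ∑ i, t i * E x (A i y) = ipBlocks (f x) (wvec t y))
    (FIBH : ∀ (t : Fin r → ZMod 2) ω,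
      ((univ : Finset Y).filter (fun y => wvec t y = ω)).card ≤ r+1)
    (ε θ : ℝ) (hε : 0 ≤ ε) (hθ : 0 < θ)
    (hbias : ∀ μW : (Fin (r+1) → Fin (s+1) → ZMod 2) → ℝ, IsDist μW →
       (∀ ω, μW ω ≤ ((r:ℝ)+1) * (Fintype.card Y : ℝ)⁻¹ / θ) →
       |∑ x, μX x * ∑ ω, μW ω * chi (ipBlocks (f x) ω)| ≤ 2*ε) :
    SD (pushD (fun xy : BS n1 × Y =>
          (E xy.1 xy.2, fun i => E xy.1 (A i xy.2), xy.2)) (prodD μX (uniformD Y)))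
       (prodD (uniformD (ZMod 2))
         (pushD (fun xy : BS n1 × Y =>
           ((fun i => E xy.1 (A i xy.2)), xy.2)) (prodD μX (uniformD Y))))
      ≤ (2:ℝ)^r * (2*ε + θ) := by
  classical
  set p : BS n1 × Y → ℝ := prodD μX (uniformD Y) with hpdef
  set F : BS n1 × Y → ZMod 2 × (Fin r → ZMod 2) × Y :=
    fun xy => (E xy.1 xy.2, fun i => E xy.1 (A i xy.2), xy.2) with hF
  set G : BS n1 × Y → (Fin r → ZMod 2) × Y :=
    fun xy => ((fun i => E xy.1 (A i xy.2)), xy.2) with hG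
  set P := pushD F p with hP
  set R := pushD G p with hR
  set Q := prodD (uniformD (ZMod 2)) R with hQ
  show SD P Q ≤ (2:ℝ)^r * (2*ε + θ)
  have hμX0 := hXdist.1
  have hμX1 := hXdist.2
  have hcardY : (0:ℝ) < (Fintype.card Y : ℝ) := by
    have := Fintype.card_pos (α := Y)
    exact_mod_cast this
  have huY0 : ∀ y : Y, (0:ℝ) ≤ uniformD Y y := fun y => by
    unfold uniformD; positivity
  have huY1 : ∑ y : Y, uniformD Y y = 1 := by
    unfold uniformD
    rw [Finset.sum_const, nsmul_eq_mul, Finset.card_univ, mul_inv_cancel₀ (ne_of_gt hcardY)]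
  -- sign function
  set sg : ZMod 2 × (Fin r → ZMod 2) × Y → ℝ := fun z => if Q z ≤ P z then 1 else -1 with hsg
  set tau : (Fin r → ZMod 2) × Y → ℝ := fun u => (sg (0,u) + sg (1,u))/2 with htau
  set gam : (Fin r → ZMod 2) × Y → ℝ := fun u => (sg (0,u) - sg (1,u))/2 with hgam
  have habs : ∀ z, |P z - Q z| = sg z * (P z - Q z) := by
    intro z; simp only [hsg]
    by_cases h : Q z ≤ P z
    · rw [if_pos h, one_mul, abs_of_nonneg (sub_nonneg.mpr h)]
    · rw [if_neg h, abs_of_neg (sub_neg.mpr (lt_of_not_ge h)), neg_one_mul]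
  have hgam1 : ∀ u, |gam u| ≤ 1 := by
    intro u; simp only [hgam, hsg]
    split <;> split <;> norm_num
  have step1 : SD P Q = ((∑ z, sg z * P z) - (∑ z, sg z * Q z))/2 := by
    rw [SD]
    congr 1
    rw [← Finset.sum_sub_distrib]
    exact Finset.sum_congr rfl fun z _ => by rw [habs z, mul_sub]
  have step2 : ∑ z, sg z * P z = ∑ xy, sg (F xy) * p xy := sum_g_pushD F p sg
  have step3 : ∑ z, sg z * Q z = ∑ xy, tau (G xy) * p xy := by
    have hcard2 : (Fintype.card (ZMod 2) : ℝ)⁻¹ = 2⁻¹ := by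
      rw [ZMod.card]; norm_num
    calc ∑ z, sg z * Q z
        = ∑ b : ZMod 2, ∑ u, sg (b,u) * Q (b,u) := Fintype.sum_prod_type _
      _ = ∑ u, sg (0,u) * (2⁻¹ * R u) + ∑ u, sg (1,u) * (2⁻¹ * R u) := by
          rw [sum_zmod2 (fun b => ∑ u, sg (b,u) * Q (b,u))]
          congr 1 <;>
          · refine Finset.sum_congr rfl fun u _ => ?_
            rw [hQ]
            show sg _ * (uniformD (ZMod 2) _ * R u) = _
            unfold uniformD
            rw [hcard2]
      _ = ∑ u, tau u * R u := by
          rw [← Finset.sum_add_distrib]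
          refine Finset.sum_congr rfl fun u _ => ?_
          simp only [htau]; ring
      _ = ∑ xy, tau (G xy) * p xy := sum_g_pushD G p tau
  have step4 : ∀ xy : BS n1 × Y, sg (F xy) - tau (G xy) = chi (E xy.1 xy.2) * gam (G xy) := by
    intro xy
    have hFxy : F xy = (E xy.1 xy.2, G xy) := rfl
    rw [hFxy]; simp only [htau, hgam]
    rcases zmod2_cases (E xy.1 xy.2) with h | h <;> rw [h]
    · rw [chi_zero]; ring
    · rw [chi_one]; ring
  have main1 : SD P Q = (∑ xy : BS n1 × Y, p xy * (chi (E xy.1 xy.2) * gam (G xy)))/2 := by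
    rw [step1, step2, step3, ← Finset.sum_sub_distrib]
    congr 1
    refine Finset.sum_congr rfl fun xy _ => ?_
    rw [← sub_mul, step4 xy]
    ring
  -- Fourier inversion
  set chat : (Fin r → ZMod 2) → Y → ℝ :=
    fun t y => ∑ v : Fin r → ZMod 2, gam (v, y) * chi (∑ i, t i * v i) with hchat
  have h2r : (0:ℝ) < (2:ℝ)^r := by positivity
  have hinv : ∀ (v : Fin r → ZMod 2) (y : Y),
      gam (v,y) = ((2:ℝ)^r)⁻¹ * ∑ t : Fin r → ZMod 2, chat t y * chi (∑ i, t i * v i) := by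
    intro v y
    have expand : ∑ t : Fin r → ZMod 2, chat t y * chi (∑ i, t i * v i)
        = ∑ v' : Fin r → ZMod 2, gam (v', y)
            * ∑ t : Fin r → ZMod 2, chi (∑ i, t i * (v' i + v i)) := by
      calc ∑ t : Fin r → ZMod 2, chat t y * chi (∑ i, t i * v i)
          = ∑ t : Fin r → ZMod 2, ∑ v' : Fin r → ZMod 2,
              gam (v', y) * chi (∑ i, t i * (v' i + v i)) := by
            refine Finset.sum_congr rfl fun t _ => ?_
            simp only [hchat]; rw [Finset.sum_mul]
            refine Finset.sum_congr rfl fun v' _ => ?_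
            rw [mul_assoc, ← chi_add]
            congr 2
            rw [← Finset.sum_add_distrib]
            exact Finset.sum_congr rfl fun i _ => by ring
        _ = ∑ v' : Fin r → ZMod 2, ∑ t : Fin r → ZMod 2,
              gam (v', y) * chi (∑ i, t i * (v' i + v i)) := Finset.sum_comm
        _ = _ := by
            refine Finset.sum_congr rfl fun v' _ => ?_
            rw [Finset.mul_sum]
    have horth : ∀ v' : Fin r → ZMod 2,
        ∑ t : Fin r → ZMod 2, chi (∑ i, t i * (v' i + v i))
          = if v' = v then ((2:ℝ)^r) else 0 := by
      intro v'
      rw [chi_orth (fun i => v' i + v i)]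
      have hiff : ((fun i => v' i + v i) = 0) ↔ (v' = v) := by
        constructor
        · intro h
          funext i
          have h2 : v' i + v i = 0 := congrFun h i
          rcases zmod2_cases (v' i) with h1|h1 <;> rcases zmod2_cases (v i) with h3|h3 <;>
              rw [h1, h3] <;> rw [h1, h3] at h2
          · exact absurd h2 (by decide)
          · exact absurd h2 (by decide)
        · intro h
          subst h
          funext i
          show v' i + v' i = 0
          rcases zmod2_cases (v' i) with h1|h1 <;> rw [h1] <;> decide
      rw [if_congr hiff rfl rfl]
    have hsum : ∑ v' : Fin r → ZMod 2, gam (v', y)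
          * ∑ t : Fin r → ZMod 2, chi (∑ i, t i * (v' i + v i)) = gam (v, y) * (2:ℝ)^r := by
      calc ∑ v' : Fin r → ZMod 2, gam (v', y) * ∑ t : Fin r → ZMod 2, chi (∑ i, t i * (v' i + v i))
          = ∑ v' : Fin r → ZMod 2, (if v' = v then gam (v', y) * (2:ℝ)^r else 0) := by
            refine Finset.sum_congr rfl fun v' _ => ?_
            rw [horth v']
            split <;> simp
        _ = gam (v, y) * (2:ℝ)^r := by rw [Finset.sum_ite_eq']; simp
    rw [expand, hsum]
    field_simp

  -- reorganize into per-t sums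
  set c : (Fin r → ZMod 2) → Y → ℝ := fun t y => ((2:ℝ)^r)⁻¹ * chat t y with hc
  set Sval : (Fin r → ZMod 2) → ℝ :=
    fun t => ∑ x, μX x * ∑ y, uniformD Y y * c t y * chi (ipBlocks (f x) (wvec t y)) with hSval
  have main2 : SD P Q = (∑ t : Fin r → ZMod 2, Sval t)/2 := by
    rw [main1]
    congr 1
    have hper : ∀ xy : BS n1 × Y, p xy * (chi (E xy.1 xy.2) * gam (G xy))
        = ∑ t : Fin r → ZMod 2, c t xy.2 * (p xy * chi (ipBlocks (f xy.1) (wvec t xy.2))) := by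
      intro xy
      have hGxy : G xy = ((fun i => E xy.1 (A i xy.2)), xy.2) := rfl
      rw [hGxy, hinv (fun i => E xy.1 (A i xy.2)) xy.2]
      rw [Finset.mul_sum, Finset.mul_sum, Finset.mul_sum]
      refine Finset.sum_congr rfl fun t _ => ?_
      have hchi : chi (E xy.1 xy.2) * chi (∑ i, t i * E xy.1 (A i xy.2))
          = chi (ipBlocks (f xy.1) (wvec t xy.2)) := by
        rw [← chi_add, LIN xy.1 xy.2 t]
      rw [← hchi]
      simp only [hc]
      ring
    calc ∑ xy : BS n1 × Y, p xy * (chi (E xy.1 xy.2) * gam (G xy))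
        = ∑ xy : BS n1 × Y, ∑ t : Fin r → ZMod 2,
            c t xy.2 * (p xy * chi (ipBlocks (f xy.1) (wvec t xy.2))) :=
          Finset.sum_congr rfl fun xy _ => hper xy
      _ = ∑ t : Fin r → ZMod 2, ∑ xy : BS n1 × Y,
            c t xy.2 * (p xy * chi (ipBlocks (f xy.1) (wvec t xy.2))) := Finset.sum_comm
      _ = ∑ t, Sval t := by
          refine Finset.sum_congr rfl fun t _ => ?_
          calc ∑ xy : BS n1 × Y, c t xy.2 * (p xy * chi (ipBlocks (f xy.1) (wvec t xy.2)))
              = ∑ x, ∑ y, c t y * (p (x,y) * chi (ipBlocks (f x) (wvec t y))) :=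
                Fintype.sum_prod_type _
            _ = Sval t := by
                simp only [hSval]
                refine Finset.sum_congr rfl fun x _ => ?_
                rw [Finset.mul_sum]
                refine Finset.sum_congr rfl fun y _ => ?_
                have hp' : p (x,y) = μX x * uniformD Y y := rfl
                rw [hp']
                ring
  have hc1 : ∀ t y, |c t y| ≤ 1 := by
    intro t y
    have h1 : |chat t y| ≤ (2:ℝ)^r := by
      calc |chat t y| ≤ ∑ v : Fin r → ZMod 2, |gam (v,y) * chi (∑ i, t i * v i)| := by
            simp only [hchat]; exact Finset.abs_sum_le_sum_abs _ _
        _ ≤ ∑ _v : Fin r → ZMod 2, 1 := by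
            refine Finset.sum_le_sum fun v _ => ?_
            rw [abs_mul, abs_chi, mul_one]
            exact hgam1 (v,y)
        _ = (2:ℝ)^r := by
            rw [Finset.sum_const, nsmul_eq_mul, mul_one, Finset.card_univ]
            simp [Fintype.card_fun]
    simp only [hc]
    rw [abs_mul, abs_inv, abs_of_nonneg (le_of_lt h2r)]
    calc ((2:ℝ)^r)⁻¹ * |chat t y| ≤ ((2:ℝ)^r)⁻¹ * (2:ℝ)^r :=
          mul_le_mul_of_nonneg_left h1 (by positivity)
      _ = 1 := inv_mul_cancel₀ (ne_of_gt h2r)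
  -- key bias bound
  have bnd : ∀ (t : Fin r → ZMod 2) (g : Y → ℝ), (∀ y, 0 ≤ g y) → (∀ y, g y ≤ 1) →
      |∑ x, μX x * ∑ y, uniformD Y y * g y * chi (ipBlocks (f x) (wvec t y))| ≤ 2*ε + θ := by
    intro t g hg0 hg1
    set μ : (Fin (r+1) → Fin (s+1) → ZMod 2) → ℝ :=
      fun ω => ∑ y, if wvec t y = ω then uniformD Y y * g y else 0 with hμ
    have hcol : ∀ x : BS n1, ∑ ω, μ ω * chi (ipBlocks (f x) ω)
        = ∑ y, uniformD Y y * g y * chi (ipBlocks (f x) (wvec t y)) := by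
      intro x
      calc ∑ ω, μ ω * chi (ipBlocks (f x) ω)
          = ∑ ω, ∑ y, (if wvec t y = ω then uniformD Y y * g y * chi (ipBlocks (f x) ω) else 0) := by
            refine Finset.sum_congr rfl fun ω _ => ?_
            simp only [hμ]
            rw [Finset.sum_mul]
            exact Finset.sum_congr rfl fun y _ => by rw [ite_mul, zero_mul]
        _ = ∑ y, ∑ ω, (if wvec t y = ω then uniformD Y y * g y * chi (ipBlocks (f x) ω) else 0) :=
            Finset.sum_comm
        _ = ∑ y, uniformD Y y * g y * chi (ipBlocks (f x) (wvec t y)) := by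
            refine Finset.sum_congr rfl fun y _ => ?_
            rw [Finset.sum_ite_eq]
            simp
    have hμ0 : ∀ ω, 0 ≤ μ ω := by
      intro ω; simp only [hμ]
      refine Finset.sum_nonneg fun y _ => ?_
      split
      · exact mul_nonneg (huY0 y) (hg0 y)
      · exact le_refl 0
    have hμpt : ∀ ω, μ ω ≤ ((r:ℝ)+1) * (Fintype.card Y : ℝ)⁻¹ := by
      intro ω
      have h1 : μ ω ≤ ∑ y, (if wvec t y = ω then (Fintype.card Y : ℝ)⁻¹ else 0) := by
        simp only [hμ]
        refine Finset.sum_le_sum fun y _ => ?_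
        split
        · calc uniformD Y y * g y ≤ uniformD Y y * 1 :=
                mul_le_mul_of_nonneg_left (hg1 y) (huY0 y)
            _ = (Fintype.card Y : ℝ)⁻¹ := by rw [mul_one]; rfl
        · exact le_refl 0
      have h2 : ∑ y, (if wvec t y = ω then (Fintype.card Y : ℝ)⁻¹ else 0)
          = ((univ.filter (fun y => wvec t y = ω)).card : ℝ) * (Fintype.card Y : ℝ)⁻¹ := by
        rw [← Finset.sum_filter, Finset.sum_const, nsmul_eq_mul]
      refine le_trans h1 (le_trans (le_of_eq h2) ?_)
      refine mul_le_mul_of_nonneg_right ?_ (by positivity)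
      exact_mod_cast FIBH t ω
    set pm := ∑ ω, μ ω with hpm
    have hpmg : pm = ∑ y, uniformD Y y * g y := by
      simp only [hpm, hμ]
      rw [Finset.sum_comm]
      refine Finset.sum_congr rfl fun y _ => ?_
      rw [Finset.sum_ite_eq]
      simp
    have hpm0 : 0 ≤ pm := Finset.sum_nonneg fun ω _ => hμ0 ω
    have hpm1 : pm ≤ 1 := by
      rw [hpmg, ← huY1]
      refine Finset.sum_le_sum fun y _ => ?_
      calc uniformD Y y * g y ≤ uniformD Y y * 1 := mul_le_mul_of_nonneg_left (hg1 y) (huY0 y)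
        _ = uniformD Y y := mul_one _
    have htarget : ∑ x, μX x * ∑ y, uniformD Y y * g y * chi (ipBlocks (f x) (wvec t y))
        = ∑ x, μX x * ∑ ω, μ ω * chi (ipBlocks (f x) ω) :=
      Finset.sum_congr rfl fun x _ => by rw [hcol x]
    rw [htarget]
    rcases le_or_gt pm θ with hple | hpgt
    · have habs1 : ∀ x, |∑ ω, μ ω * chi (ipBlocks (f x) ω)| ≤ pm := by
        intro x
        calc |∑ ω, μ ω * chi (ipBlocks (f x) ω)| ≤ ∑ ω, |μ ω * chi (ipBlocks (f x) ω)| :=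
              Finset.abs_sum_le_sum_abs _ _
          _ = ∑ ω, μ ω := Finset.sum_congr rfl fun ω _ => by
              rw [abs_mul, abs_chi, mul_one, abs_of_nonneg (hμ0 ω)]
          _ = pm := rfl
      calc |∑ x, μX x * ∑ ω, μ ω * chi (ipBlocks (f x) ω)|
          ≤ ∑ x, |μX x * ∑ ω, μ ω * chi (ipBlocks (f x) ω)| := Finset.abs_sum_le_sum_abs _ _
        _ ≤ ∑ x, μX x * pm := by
            refine Finset.sum_le_sum fun x _ => ?_
            rw [abs_mul, abs_of_nonneg (hμX0 x)]
            exact mul_le_mul_of_nonneg_left (habs1 x) (hμX0 x)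
        _ = pm := by rw [← Finset.sum_mul, hμX1, one_mul]
        _ ≤ 2*ε + θ := by linarith
    · have hpm0' : 0 < pm := lt_trans hθ hpgt
      set ν : (Fin (r+1) → Fin (s+1) → ZMod 2) → ℝ := fun ω => μ ω / pm with hν
      have hνdist : IsDist ν := by
        constructor
        · intro ω; exact div_nonneg (hμ0 ω) (le_of_lt hpm0')
        · show ∑ ω, μ ω / pm = 1
          rw [← Finset.sum_div]
          exact div_self (ne_of_gt hpm0')
      have hνpt : ∀ ω, ν ω ≤ ((r:ℝ)+1) * (Fintype.card Y : ℝ)⁻¹ / θ := by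
        intro ω
        show μ ω / pm ≤ _
        exact div_le_div₀ (by positivity) (hμpt ω) hθ hpgt.le
      have hb2 := hbias ν hνdist hνpt
      have hfac : ∑ x, μX x * ∑ ω, μ ω * chi (ipBlocks (f x) ω)
          = pm * ∑ x, μX x * ∑ ω, ν ω * chi (ipBlocks (f x) ω) := by
        rw [Finset.mul_sum]
        refine Finset.sum_congr rfl fun x _ => ?_
        have hterm : ∀ ω, μ ω * chi (ipBlocks (f x) ω) = pm * (ν ω * chi (ipBlocks (f x) ω)) := by
          intro ω
          show μ ω * _ = pm * (μ ω / pm * _)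
          field_simp
        rw [Finset.sum_congr rfl fun ω _ => hterm ω, ← Finset.mul_sum]
        ring
      rw [hfac, abs_mul, abs_of_nonneg hpm0]
      calc pm * |∑ x, μX x * ∑ ω, ν ω * chi (ipBlocks (f x) ω)| ≤ 1 * (2*ε) :=
            mul_le_mul hpm1 hb2 (abs_nonneg _) zero_le_one
        _ ≤ 2*ε + θ := by linarith
  -- decompose Sval and conclude
  have hBd : ∀ t : Fin r → ZMod 2, |Sval t| ≤ 2*(2*ε + θ) := by
    intro t
    have hdecomp : Sval t =
        (∑ x, μX x * ∑ y, uniformD Y y * max (c t y) 0 * chi (ipBlocks (f x) (wvec t y)))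
        - (∑ x, μX x * ∑ y, uniformD Y y * max (-(c t y)) 0 * chi (ipBlocks (f x) (wvec t y))) := by
      simp only [hSval]
      rw [← Finset.sum_sub_distrib]
      refine Finset.sum_congr rfl fun x _ => ?_
      rw [← mul_sub, ← Finset.sum_sub_distrib]
      congr 1
      refine Finset.sum_congr rfl fun y _ => ?_
      rcases le_total 0 (c t y) with h | h
      · rw [max_eq_left h, max_eq_right (neg_nonpos.mpr h)]; ring
      · rw [max_eq_right h, max_eq_left (neg_nonneg.mpr h)]; ring
    rw [hdecomp]
    have h1 := bnd t (fun y => max (c t y) 0) (fun y => le_max_right _ _)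
      (fun y => max_le (le_of_abs_le (hc1 t y)) zero_le_one)
    have h2 := bnd t (fun y => max (-(c t y)) 0) (fun y => le_max_right _ _)
      (fun y => max_le (le_of_abs_le (by rw [abs_neg]; exact hc1 t y)) zero_le_one)
    have h3 := abs_sub
      (∑ x, μX x * ∑ y, uniformD Y y * max (c t y) 0 * chi (ipBlocks (f x) (wvec t y)))
      (∑ x, μX x * ∑ y, uniformD Y y * max (-(c t y)) 0 * chi (ipBlocks (f x) (wvec t y)))
    linarith
  have hcardT : ((Fintype.card (Fin r → ZMod 2)) : ℝ) = (2:ℝ)^r := by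
    simp [Fintype.card_fun]
  calc SD P Q = (∑ t : Fin r → ZMod 2, Sval t)/2 := main2
    _ ≤ (∑ t : Fin r → ZMod 2, |Sval t|)/2 := by
        have : ∑ t : Fin r → ZMod 2, Sval t ≤ ∑ t : Fin r → ZMod 2, |Sval t| :=
          Finset.sum_le_sum fun t _ => le_abs_self _
        linarith
    _ ≤ (∑ _t : Fin r → ZMod 2, 2*(2*ε+θ))/2 := by
        have := Finset.sum_le_sum fun (t : Fin r → ZMod 2) (_ : t ∈ univ) => hBd t
        linarith
    _ = (2:ℝ)^r * (2*ε + θ) := by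
        rw [Finset.sum_const, nsmul_eq_mul, Finset.card_univ, hcardT]
        ring


lemma ip_split {a b : ℕ} {ι' : Type*} (v w w1 : Fin a → Fin b → ZMod 2) (S : Finset ι')
    (w2 : ι' → Fin a → Fin b → ZMod 2)
    (h : ∀ j i, w j i = w1 j i + ∑ q ∈ S, w2 q j i) :
    ipBlocks v w = ipBlocks v w1 + ∑ q ∈ S, ipBlocks v (w2 q) := by
  unfold ipBlocks
  calc ∑ j, ∑ i, v j i * w j i
      = ∑ j, ∑ i, (v j i * w1 j i + ∑ q ∈ S, v j i * w2 q j i) := by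
        refine Finset.sum_congr rfl fun j _ => Finset.sum_congr rfl fun i _ => ?_
        rw [h j i, mul_add, Finset.mul_sum]
    _ = ∑ j, ((∑ i, v j i * w1 j i) + ∑ i, ∑ q ∈ S, v j i * w2 q j i) := by
        refine Finset.sum_congr rfl fun j _ => ?_
        rw [Finset.sum_add_distrib]
    _ = (∑ j, ∑ i, v j i * w1 j i) + ∑ j, ∑ i, ∑ q ∈ S, v j i * w2 q j i :=
        Finset.sum_add_distrib
    _ = (∑ j, ∑ i, v j i * w1 j i) + ∑ q ∈ S, ∑ j, ∑ i, v j i * w2 q j i := by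
        congr 1
        calc ∑ j, ∑ i, ∑ q ∈ S, v j i * w2 q j i
            = ∑ j, ∑ q ∈ S, ∑ i, v j i * w2 q j i := by
              refine Finset.sum_congr rfl fun j _ => Finset.sum_comm
          _ = ∑ q ∈ S, ∑ j, ∑ i, v j i * w2 q j i := Finset.sum_comm

end S10

open Polynomial in
theorem powsum_inj {K : Type} [Field K] [CharP K 2] (r : ℕ)
    (O O' : Finset K) (hO0 : (0:K) ∉ O) (hO'0 : (0:K) ∉ O')
    (hcard : O.card ≤ r+1) (hcard' : O'.card ≤ r+1)
    (hsum : ∀ j : ℕ, j ≤ r → ∑ a ∈ O, a^(2*j+1) = ∑ a ∈ O', a^(2*j+1)) :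
    O = O' := by
  set D : Finset K := symmDiff O O' with hDdef
  have hDu : D = (O \ O') ∪ (O' \ O) := by
    rw [hDdef, symmDiff_def, Finset.sup_eq_union]
  have hsplit : ∀ g : K → K, ∑ a ∈ D, g a = ∑ a ∈ O, g a + ∑ a ∈ O', g a := by
    intro g
    have h1 : ∑ a ∈ D, g a = ∑ a ∈ O \ O', g a + ∑ a ∈ O' \ O, g a := by
      rw [hDu, Finset.sum_union disjoint_sdiff_sdiff]
    have h2 : ∑ a ∈ O ∩ O', g a + ∑ a ∈ O \ O', g a = ∑ a ∈ O, g a :=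
      Finset.sum_inter_add_sum_sdiff _ _ _
    have h3 : ∑ a ∈ O' ∩ O, g a + ∑ a ∈ O' \ O, g a = ∑ a ∈ O', g a :=
      Finset.sum_inter_add_sum_sdiff _ _ _
    have h4 : ∑ a ∈ O' ∩ O, g a = ∑ a ∈ O ∩ O', g a := by rw [Finset.inter_comm]
    have h5 : ∀ x : K, x + x = 0 := CharTwo.add_self_eq_zero
    rw [h1, ← h2, ← h3, h4]
    ring_nf
    rw [mul_two, h5, add_zero]
  have hD0 : ∀ a ∈ D, a ≠ 0 := by
    intro a ha
    rw [hDdef, Finset.mem_symmDiff] at ha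
    rcases ha with ⟨h, _⟩ | ⟨h, _⟩
    · exact fun h0 => hO0 (h0 ▸ h)
    · exact fun h0 => hO'0 (h0 ▸ h)
  have hcardD : D.card ≤ 2*r+2 := by
    have : D.card ≤ (O \ O').card + (O' \ O).card := by
      rw [hDu]; exact Finset.card_union_le _ _
    have h1 : (O \ O').card ≤ O.card := Finset.card_le_card (Finset.sdiff_subset)
    have h2 : (O' \ O).card ≤ O'.card := Finset.card_le_card (Finset.sdiff_subset)
    omega
  have hodd : ∀ j : ℕ, j ≤ r → ∑ a ∈ D, a^(2*j+1) = 0 := by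
    intro j hj
    rw [hsplit (fun a => a^(2*j+1))]
    show ∑ a ∈ O, a^(2*j+1) + ∑ a ∈ O', a^(2*j+1) = 0
    rw [hsum j hj]
    exact CharTwo.add_self_eq_zero _
  set N := 2*r+2 with hN
  have hall : ∀ m : ℕ, 1 ≤ m → m ≤ N → ∑ a ∈ D, a^m = 0 := by
    intro m
    induction m using Nat.strong_induction_on with
    | _ m ih =>
      intro h1 h2
      rcases Nat.even_or_odd m with he | ho
      · obtain ⟨m', hm'⟩ := he
        have : ∑ a ∈ D, a^m = (∑ a ∈ D, a^m')^2 := by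
          rw [sum_pow_char]
          exact Finset.sum_congr rfl fun a _ => by rw [← pow_mul]; congr 1; omega
        rw [this, ih m' (by omega) (by omega) (by omega)]
        exact zero_pow (by norm_num)
      · obtain ⟨j, hj⟩ := ho
        rw [show m = 2*j+1 by omega]
        exact hodd j (by omega)
  have hDempty : D = ∅ := by
    by_contra hne
    obtain ⟨a₀, ha₀⟩ := Finset.nonempty_of_ne_empty hne
    set Q1 : K[X] := ∑ a ∈ D, C a * ∏ b ∈ D.erase a, (1 + C b * X) with hQ1
    set R1 : K[X] := ∑ a ∈ D, C (a^(N+1)) * ∏ b ∈ D.erase a, (1 + C b * X) with hR1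
    have key : ∀ a : K, (1 + C a * X) * (∑ m ∈ range N, (C a * X)^m) = 1 + (C a * X)^N := by
      intro a
      have := geom_sum_mul (C a * X) N
      rw [CharTwo.sub_eq_add, CharTwo.sub_eq_add] at this
      calc (1 + C a * X) * (∑ m ∈ range N, (C a * X)^m)
          = (∑ m ∈ range N, (C a * X)^m) * (C a * X + 1) := by ring
        _ = (C a * X)^N + 1 := this
        _ = 1 + (C a * X)^N := by ring
    have expand : ∀ a ∈ D,
        (∏ b ∈ D, (1 + C b * X)) * (C a * ∑ m ∈ range N, (C a * X)^m)
          = C a * ∏ b ∈ D.erase a, (1 + C b * X)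
            + X^N * (C (a^(N+1)) * ∏ b ∈ D.erase a, (1 + C b * X)) := by
      intro a ha
      rw [← Finset.mul_prod_erase D _ ha, C_pow]
      calc ((1 + C a * X) * ∏ b ∈ D.erase a, (1 + C b * X)) * (C a * ∑ m ∈ range N, (C a * X)^m)
          = ((1 + C a * X) * (∑ m ∈ range N, (C a * X)^m)) * (C a * ∏ b ∈ D.erase a, (1 + C b * X)) := by ring
        _ = (1 + (C a * X)^N) * (C a * ∏ b ∈ D.erase a, (1 + C b * X)) := by rw [key a]
        _ = C a * ∏ b ∈ D.erase a, (1 + C b * X)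
            + X^N * (C a ^ (N+1) * ∏ b ∈ D.erase a, (1 + C b * X)) := by ring
    -- sum over a of LHS is zero
    have hzero : ∑ a ∈ D, (C a * ∑ m ∈ range N, (C a * X)^m) = (0 : K[X]) := by
      have : ∀ a : K, C a * ∑ m ∈ range N, (C a * X)^m
          = ∑ m ∈ range N, C (a^(m+1)) * X^m := by
        intro a
        rw [Finset.mul_sum]
        exact Finset.sum_congr rfl fun m _ => by
          rw [mul_pow, ← C_pow, ← mul_assoc, ← C_mul, ← pow_succ']
      calc ∑ a ∈ D, (C a * ∑ m ∈ range N, (C a * X)^m)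
          = ∑ a ∈ D, ∑ m ∈ range N, C (a^(m+1)) * X^m := Finset.sum_congr rfl fun a _ => this a
        _ = ∑ m ∈ range N, (∑ a ∈ D, C (a^(m+1))) * X^m := by
            rw [Finset.sum_comm]
            exact Finset.sum_congr rfl fun m _ => by rw [Finset.sum_mul]
        _ = 0 := by
            apply Finset.sum_eq_zero
            intro m hm
            rw [← map_sum, hall (m+1) (by omega) (by simp at hm; omega), map_zero, zero_mul]
    have hQR : Q1 + X^N * R1 = 0 := by
      have := Finset.sum_congr rfl expand
      rw [← Finset.mul_sum, hzero, mul_zero] at this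
      rw [hQ1, hR1, Finset.mul_sum, ← Finset.sum_add_distrib]
      exact this.symm
    have hQ1deg : Q1.natDegree < N := by
      have hdegsum : ∀ a ∈ D, (C a * ∏ b ∈ D.erase a, (1 + C b * X)).natDegree ≤ N - 1 := by
        intro a ha
        have h1 : ∀ b ∈ D.erase a, (1 + C b * X).natDegree ≤ 1 := by
          intro b _
          refine le_trans (Polynomial.natDegree_add_le _ _) ?_
          simp only [Polynomial.natDegree_one, max_le_iff]
          exact ⟨Nat.zero_le _, le_trans (Polynomial.natDegree_C_mul_le _ _) (by simp)⟩
        have h2 : (∏ b ∈ D.erase a, (1 + C b * X)).natDegree ≤ (D.erase a).card * 1 := by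
          refine le_trans (Polynomial.natDegree_prod_le _ _) ?_
          have := Finset.sum_le_card_nsmul (D.erase a) (fun b => (1 + C b * X).natDegree) 1 h1
          simpa using this
        have h3 := Finset.card_erase_lt_of_mem ha
        have h4 : (C a * ∏ b ∈ D.erase a, (1 + C b * X)).natDegree
            ≤ (∏ b ∈ D.erase a, (1 + C b * X)).natDegree := Polynomial.natDegree_C_mul_le _ _
        omega
      have : Q1.natDegree ≤ N - 1 := Polynomial.natDegree_sum_le_of_forall_le _ _ hdegsum
      omega
    have hQ10 : Q1 = 0 := by
      by_contra hQne
      have hRne : R1 ≠ 0 := by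
        intro h
        rw [h, mul_zero, add_zero] at hQR
        exact hQne hQR
      have : Q1 = X^N * R1 := by
        have h2 : Q1 + X^N*R1 + X^N*R1 = X^N*R1 := by rw [hQR, zero_add]
        rwa [add_assoc, CharTwo.add_self_eq_zero, add_zero] at h2
      have hdeg : Q1.natDegree = N + R1.natDegree := by
        rw [this, Polynomial.natDegree_mul (pow_ne_zero _ Polynomial.X_ne_zero) hRne, Polynomial.natDegree_X_pow]
      omega
    -- evaluate at a₀⁻¹
    have heval := congrArg (Polynomial.eval a₀⁻¹) hQ10
    rw [hQ1] at heval
    simp only [Polynomial.eval_finset_sum, Polynomial.eval_mul, Polynomial.eval_C,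
      Polynomial.eval_prod, Polynomial.eval_add, Polynomial.eval_one, Polynomial.eval_X,
      Polynomial.eval_zero] at heval
    rw [Finset.sum_eq_single_of_mem a₀ ha₀] at heval
    · have ha₀0 : a₀ ≠ 0 := hD0 a₀ ha₀
      have hprod : ∏ b ∈ D.erase a₀, (1 + b * a₀⁻¹) ≠ 0 := by
        apply Finset.prod_ne_zero_iff.mpr
        intro b hb
        intro hzero
        have h2 : (1:K) + 1 = 0 := CharTwo.add_self_eq_zero 1
        have hmul : b * a₀⁻¹ = 1 := by linear_combination hzero - h2
        rw [mul_inv_eq_one₀ ha₀0] at hmul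
        exact (Finset.ne_of_mem_erase hb) hmul
      exact hprod (by
        rcases mul_eq_zero.mp heval with h | h
        · exact absurd h ha₀0
        · exact h)
    · intro b hb hba
      have ha₀mem : a₀ ∈ D.erase b := Finset.mem_erase.mpr ⟨Ne.symm hba, ha₀⟩
      have hz : (1 + a₀ * a₀⁻¹ : K) = 0 := by
        rw [mul_inv_cancel₀ (hD0 a₀ ha₀)]; exact CharTwo.add_self_eq_zero 1
      rw [Finset.prod_eq_zero ha₀mem hz, mul_zero]
  rw [hDdef, ← Finset.bot_eq_empty] at hDempty
  exact symmDiff_eq_bot.mp hDempty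

theorem fiber_card {K : Type} [Field K] [CharP K 2] {Y : Type} [Fintype Y] [DecidableEq Y]
    {s r : ℕ}
    (ι : Y → K) (hι : Function.Injective ι) (hι0 : ∀ y, ι y ≠ 0)
    (e : K ≃+ (Fin (s+1) → ZMod 2))
    (A : Fin r → Y → Y) (hA : ∀ i y, A i y ≠ y)
    (t : Fin r → ZMod 2) (ω : Fin (r+1) → Fin (s+1) → ZMod 2) :
    (Finset.univ.filter (fun y : Y =>
      (fun j : Fin (r+1) => e (ι y ^ (2*(j:ℕ)+1)
        + ∑ i ∈ Finset.univ.filter (fun i => t i = 1), ι (A i y) ^ (2*(j:ℕ)+1))) = ω)).card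
      ≤ r + 1 := by
  set T : Finset (Fin r) := Finset.univ.filter (fun i => t i = 1) with hT
  set PS : Y → Fin (r+1) → K := fun y j => ι y ^ (2*(j:ℕ)+1) + ∑ i ∈ T, ι (A i y)^(2*(j:ℕ)+1)
    with hPS
  set F := Finset.univ.filter (fun y : Y => (fun j : Fin (r+1) => e (PS y j)) = ω) with hF
  show F.card ≤ r + 1
  rcases F.eq_empty_or_nonempty with h | ⟨y₀, hy₀⟩
  · rw [h]; simp
  set m : Y → Multiset K := fun y => ι y ::ₘ T.val.map (fun i => ι (A i y)) with hm
  set O : Y → Finset K := fun y =>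
    (m y).toFinset.filter (fun a => Odd ((m y).count a)) with hO
  have c1 : ∀ y, (m y).count (ι y) = 1 := by
    intro y
    rw [hm]
    simp only [Multiset.count_cons_self]
    rw [Multiset.count_eq_zero.mpr]
    intro hmem
    obtain ⟨i, hi, hEq⟩ := Multiset.mem_map.mp hmem
    exact hA i y (hι hEq)
  have c2 : ∀ y, ι y ∈ O y := by
    intro y
    rw [hO]
    refine Finset.mem_filter.mpr ⟨Multiset.mem_toFinset.mpr (Multiset.mem_cons_self _ _), ?_⟩
    rw [c1 y]; exact odd_one
  have c3 : ∀ y, (0:K) ∉ O y := by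
    intro y h
    have := Multiset.mem_toFinset.mp (Finset.mem_filter.mp h).1
    rw [hm] at this
    rcases Multiset.mem_cons.mp this with h0 | h0
    · exact hι0 y h0.symm
    · obtain ⟨i, _, hEq⟩ := Multiset.mem_map.mp h0
      exact hι0 (A i y) hEq
  have c4 : ∀ y, (O y).card ≤ r + 1 := by
    intro y
    calc (O y).card ≤ (m y).toFinset.card := Finset.card_filter_le _ _
      _ ≤ Multiset.card (m y) := Multiset.toFinset_card_le _
      _ = T.card + 1 := by rw [hm]; simp
      _ ≤ r + 1 := by
          have : T.card ≤ Fintype.card (Fin r) := by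
            rw [hT]
            exact le_trans (Finset.card_filter_le _ _) (by simp)
          simp only [Fintype.card_fin] at this
          omega
  have c5 : ∀ y (d : ℕ), ∑ a ∈ O y, a^d = ((m y).map (·^d)).sum := by
    intro y d
    rw [Finset.sum_multiset_map_count]
    rw [hO]
    rw [Finset.sum_filter]
    apply Finset.sum_congr rfl
    intro a _
    rcases Nat.even_or_odd ((m y).count a) with he | ho
    · rw [if_neg (by simpa [Nat.not_odd_iff_even] using he)]
      obtain ⟨c, hc⟩ := he
      rw [hc, add_nsmul]
      exact (CharTwo.add_self_eq_zero _).symm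
    · rw [if_pos ho]
      obtain ⟨c, hc⟩ := ho
      have h2 : (2:K) = 0 := by exact_mod_cast CharP.cast_eq_zero K 2
      rw [hc, nsmul_eq_mul]
      push_cast
      rw [h2]
      ring
  have c6 : ∀ y (j : Fin (r+1)), ∑ a ∈ O y, a^(2*(j:ℕ)+1) = PS y j := by
    intro y j
    rw [c5 y (2*(j:ℕ)+1), hm]
    rw [Multiset.map_cons, Multiset.sum_cons, Multiset.map_map]
    rfl
  -- main
  have hmain : ∀ y ∈ F, ι y ∈ O y₀ := by
    intro y hy
    have h1 : (fun j : Fin (r+1) => e (PS y j)) = (fun j => e (PS y₀ j)) := by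
      rw [(Finset.mem_filter.mp hy).2, (Finset.mem_filter.mp hy₀).2]
    have h2 : ∀ j : Fin (r+1), PS y j = PS y₀ j := by
      intro j
      exact e.injective (congrFun h1 j)
    have hOeq : O y = O y₀ := by
      apply powsum_inj r (O y) (O y₀) (c3 y) (c3 y₀) (c4 y) (c4 y₀)
      intro j hj
      have := h2 ⟨j, by omega⟩
      rw [← c6 y ⟨j, by omega⟩, ← c6 y₀ ⟨j, by omega⟩] at this
      simpa using this
    rw [← hOeq]
    exact c2 y
  calc F.card ≤ (O y₀).card := Finset.card_le_card_of_injOn ι hmain (hι.injOn)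
    _ ≤ r + 1 := c4 y₀

/-- Here `K` plays the role of `GF(2^{s+1})` (any field of that cardinality),
`e` is the fixed `F_2`-linear identification of `K` with `F_2^{s+1}`, and
`F_2^{n2}` (with `n2 = (r+1)(s+1)`) is represented as `r+1` blocks `F_2^{s+1}`;
`Enc_r(y) = (ι(y), ι(y)³, …, ι(y)^{2r+1})`. -/
theorem stmt_10
    (r n1 k s ℓ : ℕ) (hrℓ : r < ℓ) (ε : ℝ) (hε0 : 0 < ε) (hε1 : ε < 1)
    (K : Type) [Field K] [Fintype K] (hK : Fintype.card K = 2 ^ (s + 1))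
    (ι : BS s → K) (hι : Function.Injective ι) (hι0 : ∀ y, ι y ≠ 0)
    (e : K ≃+ (Fin (s + 1) → ZMod 2))
    (f : BS n1 → (Fin (r + 1) → Fin (s + 1) → ZMod 2))
    (hf : ∀ (μX : BS n1 → ℝ) (μW : (Fin (r + 1) → Fin (s + 1) → ZMod 2) → ℝ),
      IsDist μX → mEntGe μX (k:ℝ) → IsDist μW →
      mEntGe μW ((((r:ℝ) + 1) * ((s:ℝ) + 1)) / ((r:ℝ) + 1) - (ℓ:ℝ)) →
      SD (pushD (fun xw : BS n1 × (Fin (r + 1) → Fin (s + 1) → ZMod 2) =>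
            ipBlocks (f xw.1) xw.2) (prodD μX μW))
         (uniformD (ZMod 2)) ≤ ε) :
    IsNMEr r (fun x y => ipBlocks (f x) (fun j => e (ι y ^ (2 * (j:ℕ) + 1)))) (k:ℝ)
      (((r:ℝ) + 1) * (2:ℝ) ^ ((r:ℝ) + 4) * (2:ℝ) ^ (-(ℓ:ℝ))
        + (2:ℝ) ^ ((3 * (r:ℝ) + 2) / 2) * ε) := by
  have hp2 : CharP K 2 := by
    obtain ⟨p, hc⟩ := CharP.exists K
    haveI := hc
    have hprime : p.Prime := CharP.char_is_prime K p
    have hdvd : p ∣ Fintype.card K := by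
      rw [← CharP.cast_eq_zero_iff K p]
      exact FiniteField.cast_card_eq_zero K
    rw [hK] at hdvd
    have hp2' : p = 2 :=
      (Nat.prime_dvd_prime_iff_eq hprime Nat.prime_two).mp (hprime.dvd_of_dvd_pow hdvd)
    rwa [hp2'] at hc
  haveI := hp2
  intro μX hXdist hXent A hA
  classical
  set θ : ℝ := ((r:ℝ)+1) * (2:ℝ)^((1:ℝ) - (ℓ:ℝ)) with hθdef
  have hθ0 : 0 < θ := by
    apply mul_pos (by positivity)
    exact Real.rpow_pos_of_pos (by norm_num) _
  set wv : (Fin r → ZMod 2) → BS s → (Fin (r+1) → Fin (s+1) → ZMod 2) :=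
    fun t y j => e (ι y ^ (2*(j:ℕ)+1)
      + ∑ i ∈ Finset.univ.filter (fun i => t i = 1), ι (A i y) ^ (2*(j:ℕ)+1)) with hwv
  have LIN : ∀ (x : BS n1) (y : BS s) (t : Fin r → ZMod 2),
      ipBlocks (f x) (fun j => e (ι y ^ (2*(j:ℕ)+1)))
        + ∑ i, t i * ipBlocks (f x) (fun j => e (ι (A i y) ^ (2*(j:ℕ)+1)))
        = ipBlocks (f x) (wv t y) := by
    intro x y t
    rw [S10.ip_split (f x) (wv t y) (fun j => e (ι y ^ (2*(j:ℕ)+1)))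
        (Finset.univ.filter (fun i' => t i' = 1))
        (fun q j => e (ι (A q y) ^ (2*(j:ℕ)+1)))
        (fun j i => by
          simp only [hwv]
          rw [map_add, map_sum]
          simp)]
    congr 1
    rw [Finset.sum_filter]
    refine Finset.sum_congr rfl fun i _ => ?_
    rcases S10.zmod2_cases (t i) with h|h <;> rw [h]
    · rw [if_neg (by decide), zero_mul]
    · rw [if_pos rfl, one_mul]
  have FIBH : ∀ (t : Fin r → ZMod 2) (ω : Fin (r+1) → Fin (s+1) → ZMod 2),
      ((Finset.univ : Finset (BS s)).filter (fun y => wv t y = ω)).card ≤ r+1 := by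
    intro t ω
    exact fiber_card ι hι hι0 e A hA t ω
  -- the bias bound from hf
  have hr1 : ((r:ℝ)+1) ≠ 0 := by positivity
  have hcardBS : ((Fintype.card (BS s)) : ℝ) = (2:ℝ)^((s:ℝ)) := by
    have h1 : Fintype.card (BS s) = 2^s := by simp [Fintype.card_fun]
    rw [h1]
    push_cast
    rw [Real.rpow_natCast]
  have hcapeq : ((r:ℝ)+1) * ((Fintype.card (BS s)):ℝ)⁻¹ / θ
      = (2:ℝ)^(-((((r:ℝ) + 1) * ((s:ℝ) + 1)) / ((r:ℝ) + 1) - (ℓ:ℝ))) := by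
    rw [hcardBS, hθdef]
    rw [← Real.rpow_neg (by norm_num : (0:ℝ) ≤ 2)]
    rw [mul_div_mul_left _ _ hr1]
    rw [← Real.rpow_sub (by norm_num : (0:ℝ) < 2)]
    congr 1
    have hq : ((r:ℝ)+1) * ((s:ℝ)+1) / ((r:ℝ)+1) = (s:ℝ)+1 := by field_simp
    rw [hq]
    ring
  have hbias : ∀ μW : (Fin (r+1) → Fin (s+1) → ZMod 2) → ℝ, IsDist μW →
      (∀ ω, μW ω ≤ ((r:ℝ)+1) * ((Fintype.card (BS s)):ℝ)⁻¹ / θ) →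
      |∑ x, μX x * ∑ ω, μW ω * S10.chi (ipBlocks (f x) ω)| ≤ 2*ε := by
    intro μW hWdist hWpt
    have hWent : mEntGe μW ((((r:ℝ) + 1) * ((s:ℝ) + 1)) / ((r:ℝ) + 1) - (ℓ:ℝ)) := by
      intro ω
      rw [← hcapeq]
      exact hWpt ω
    have hSDle := hf μX μW hXdist hXent hWdist hWent
    set q := pushD (fun xw : BS n1 × (Fin (r+1) → Fin (s+1) → ZMod 2) =>
      ipBlocks (f xw.1) xw.2) (prodD μX μW) with hq
    have hq01 : q 0 - q 1 = ∑ x, μX x * ∑ ω, μW ω * S10.chi (ipBlocks (f x) ω) := by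
      calc q 0 - q 1
          = ∑ xw : BS n1 × (Fin (r+1) → Fin (s+1) → ZMod 2),
              ((if ipBlocks (f xw.1) xw.2 = 0 then prodD μX μW xw else 0)
               - (if ipBlocks (f xw.1) xw.2 = 1 then prodD μX μW xw else 0)) := by
            rw [hq]; unfold pushD; rw [← Finset.sum_sub_distrib]
            refine Finset.sum_congr rfl fun xw _ => ?_
            by_cases h0 : ipBlocks (f xw.1) xw.2 = 0 <;>
              by_cases h1 : ipBlocks (f xw.1) xw.2 = 1 <;> simp [h0, h1]
        _ = ∑ xw : BS n1 × (Fin (r+1) → Fin (s+1) → ZMod 2),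
              prodD μX μW xw * S10.chi (ipBlocks (f xw.1) xw.2) := by
            refine Finset.sum_congr rfl fun xw _ => ?_
            rcases S10.zmod2_cases (ipBlocks (f xw.1) xw.2) with h|h <;> rw [h]
            · rw [if_pos rfl, if_neg (by decide), S10.chi_zero]; ring
            · rw [if_neg (by decide), if_pos rfl, S10.chi_one]; ring
        _ = ∑ x, ∑ ω, prodD μX μW (x, ω) * S10.chi (ipBlocks (f x) ω) :=
            Fintype.sum_prod_type _
        _ = ∑ x, μX x * ∑ ω, μW ω * S10.chi (ipBlocks (f x) ω) := by
            refine Finset.sum_congr rfl fun x _ => ?_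
            rw [Finset.mul_sum]
            refine Finset.sum_congr rfl fun ω _ => ?_
            show μX x * μW ω * _ = _
            ring
    have hSDform : SD q (uniformD (ZMod 2)) = (|q 0 - 2⁻¹| + |q 1 - 2⁻¹|)/2 := by
      rw [SD, S10.sum_zmod2 (fun b => |q b - uniformD (ZMod 2) b|)]
      have hu0 : uniformD (ZMod 2) (0 : ZMod 2) = 2⁻¹ := by
        unfold uniformD; rw [ZMod.card]; norm_num
      have hu1 : uniformD (ZMod 2) (1 : ZMod 2) = 2⁻¹ := by
        unfold uniformD; rw [ZMod.card]; norm_num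
      rw [hu0, hu1]
    rw [← hq01]
    have h1 : |q 0 - q 1| ≤ |q 0 - 2⁻¹| + |q 1 - 2⁻¹| := by
      have h2 : q 0 - q 1 = (q 0 - 2⁻¹) - (q 1 - 2⁻¹) := by ring
      rw [h2]
      exact abs_sub _ _
    rw [hSDform] at hSDle
    linarith
  have hana := S10.ana (Y := BS s) f μX hXdist
    (fun x y => ipBlocks (f x) (fun j => e (ι y ^ (2*(j:ℕ)+1)))) A wv LIN FIBH ε θ hε0.le hθ0 hbias
  refine le_trans hana ?_
  have h2r : ((2:ℝ)^r : ℝ) = (2:ℝ)^((r:ℝ)) := (Real.rpow_natCast 2 r).symm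
  have hA2 : (2:ℝ)^r * (2*ε) ≤ (2:ℝ)^((3*(r:ℝ)+2)/2) * ε := by
    have hmul : (2:ℝ)^r * 2 = (2:ℝ)^((r:ℝ)+1) := by
      rw [Real.rpow_add (by norm_num : (0:ℝ) < 2), Real.rpow_one, h2r]
    have hle : (2:ℝ)^((r:ℝ)+1) ≤ (2:ℝ)^((3*(r:ℝ)+2)/2) := by
      apply Real.rpow_le_rpow_of_exponent_le (by norm_num)
      have hr0 : (0:ℝ) ≤ (r:ℝ) := Nat.cast_nonneg r
      linarith
    calc (2:ℝ)^r * (2*ε) = ((2:ℝ)^r * 2) * ε := by ring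
      _ = (2:ℝ)^((r:ℝ)+1) * ε := by rw [hmul]
      _ ≤ (2:ℝ)^((3*(r:ℝ)+2)/2) * ε := mul_le_mul_of_nonneg_right hle hε0.le
  have hB2 : (2:ℝ)^r * θ ≤ ((r:ℝ)+1) * (2:ℝ)^((r:ℝ)+4) * (2:ℝ)^(-(ℓ:ℝ)) := by
    rw [hθdef]
    have e1 : (2:ℝ)^r * (((r:ℝ)+1) * (2:ℝ)^((1:ℝ)-(ℓ:ℝ)))
        = ((r:ℝ)+1) * (2:ℝ)^((r:ℝ)+1-(ℓ:ℝ)) := by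
      rw [h2r, show (r:ℝ)+1-(ℓ:ℝ) = (r:ℝ) + ((1:ℝ)-(ℓ:ℝ)) from by ring,
        Real.rpow_add (by norm_num : (0:ℝ) < 2)]
      ring
    have e2 : ((r:ℝ)+1) * (2:ℝ)^((r:ℝ)+4) * (2:ℝ)^(-(ℓ:ℝ))
        = ((r:ℝ)+1) * (2:ℝ)^((r:ℝ)+4-(ℓ:ℝ)) := by
      rw [mul_assoc, ← Real.rpow_add (by norm_num : (0:ℝ) < 2)]
      ring_nf
    rw [e1, e2]
    apply mul_le_mul_of_nonneg_left _ (by positivity)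
    apply Real.rpow_le_rpow_of_exponent_le (by norm_num)
    linarith
  calc (2:ℝ)^r * (2*ε + θ) = (2:ℝ)^r * (2*ε) + (2:ℝ)^r * θ := by ring
    _ ≤ (2:ℝ)^((3*(r:ℝ)+2)/2) * ε + ((r:ℝ)+1) * (2:ℝ)^((r:ℝ)+4) * (2:ℝ)^(-(ℓ:ℝ)) :=
        add_le_add hA2 hB2
    _ = ((r:ℝ) + 1) * (2:ℝ) ^ ((r:ℝ) + 4) * (2:ℝ) ^ (-(ℓ:ℝ))
        + (2:ℝ) ^ ((3 * (r:ℝ) + 2) / 2) * ε := by ring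


end
end

section
/- There exists a universal constant c > 0 such that for every constant δ ∈ (0,1/2) and all sufficiently large even n the following holds. Fix an injective map ι : {0,1}^{n/2−1} → GF(2^{n/2}) \ {0} and a fixed F_2-linear identification of GF(2^{n/2}) with F_2^{n/2}, and define Enc : {0,1}^{n/2−1} → F_2^n by Enc(y) = (ι(y), ι(y)³). Then the function nmExt : {0,1}^n × {0,1}^{n/2−1} → {0,1} defined by nmExt(x,y) = ⟨x, Enc(y)⟩ (inner product over F_2) is a ((1/2+δ)n, 2^{−cδn})-non-malleable extractor. -/
open Finset
open scoped Classical

noncomputable section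

/-- The inner product over `F_2` of two vectors in `F_2^h × F_2^h ≅ F_2^{2h}`. -/
def ipPair {h : ℕ} (v w : (Fin h → ZMod 2) × (Fin h → ZMod 2)) : ZMod 2 :=
  (∑ i, v.1 i * w.1 i) + (∑ i, v.2 i * w.2 i)

/-! ### Auxiliary material for the proof -/

abbrev F2v (h : ℕ) := (Fin h → ZMod 2) × (Fin h → ZMod 2)

def sg (a : ZMod 2) : ℝ := if a = 0 then 1 else -1

lemma zmod2_cases (a : ZMod 2) : a = 0 ∨ a = 1 := by
  fin_cases a
  · exact Or.inl rfl
  · exact Or.inr rfl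

lemma sg_zero : sg 0 = 1 := rfl

lemma two_zmod2 : (1 + 1 : ZMod 2) = 0 := by decide

lemma sg_add (a b : ZMod 2) : sg (a + b) = sg a * sg b := by
  rcases zmod2_cases a with ha | ha <;> rcases zmod2_cases b with hb | hb <;>
    subst ha <;> subst hb <;> simp [sg, two_zmod2]

lemma sum_zmod2 (f : ZMod 2 → ℝ) : ∑ a, f a = f 0 + f 1 := by
  have h : (univ : Finset (ZMod 2)) = {0, 1} := by decide
  rw [h, Finset.sum_pair (by decide)]

lemma sg_sum {ι : Type*} (s : Finset ι) (f : ι → ZMod 2) :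
    sg (∑ i ∈ s, f i) = ∏ i ∈ s, sg (f i) := by
  induction s using Finset.induction_on with
  | empty => simp [sg_zero]
  | insert a s h ih => simp [Finset.sum_insert h, Finset.prod_insert h, sg_add, ih]

lemma sum_sg_dot {h : ℕ} (z : Fin h → ZMod 2) (hz : z ≠ 0) :
    ∑ v : Fin h → ZMod 2, sg (∑ i, z i * v i) = 0 := by
  have e1 : ∑ v : Fin h → ZMod 2, sg (∑ i, z i * v i)
      = ∑ v ∈ Fintype.piFinset (fun _ : Fin h => (univ : Finset (ZMod 2))),
          ∏ i, (fun i b => sg (z i * b)) i (v i) := by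
    rw [Fintype.piFinset_univ]
    exact Finset.sum_congr rfl fun v _ => sg_sum _ _
  rw [e1, ← Finset.prod_univ_sum (fun _ : Fin h => (univ : Finset (ZMod 2)))
    (fun i b => sg (z i * b))]
  obtain ⟨i0, hi0⟩ : ∃ i, z i ≠ 0 := by
    by_contra hc; push_neg at hc; exact hz (funext hc)
  apply Finset.prod_eq_zero (Finset.mem_univ i0)
  have hz1 : z i0 = 1 := (zmod2_cases (z i0)).resolve_left hi0
  rw [sum_zmod2]
  simp [hz1, sg, two_zmod2]

lemma ipPair_add_left {h : ℕ} (x x' v : F2v h) :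
    ipPair (x + x') v = ipPair x v + ipPair x' v := by
  simp only [ipPair, Prod.fst_add, Prod.snd_add, Pi.add_apply, add_mul,
    Finset.sum_add_distrib]
  ring

lemma ipPair_add_right {h : ℕ} (x v w : F2v h) :
    ipPair x (v + w) = ipPair x v + ipPair x w := by
  simp only [ipPair, Prod.fst_add, Prod.snd_add, Pi.add_apply, mul_add,
    Finset.sum_add_distrib]
  ring

lemma sum_sg_ipPair {h : ℕ} (z : F2v h) (hz : z ≠ 0) :
    ∑ v : F2v h, sg (ipPair z v) = 0 := by
  have e : ∑ v : F2v h, sg (ipPair z v)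
      = (∑ v1 : Fin h → ZMod 2, sg (∑ i, z.1 i * v1 i))
        * (∑ v2 : Fin h → ZMod 2, sg (∑ i, z.2 i * v2 i)) := by
    rw [Finset.sum_mul_sum, Fintype.sum_prod_type]
    exact Finset.sum_congr rfl fun v1 _ => Finset.sum_congr rfl fun v2 _ =>
      (sg_add _ _)
  rw [e]
  rcases (by
    by_contra hc
    push_neg at hc
    exact hz (Prod.ext hc.1 hc.2) : z.1 ≠ 0 ∨ z.2 ≠ 0) with hz1 | hz2
  · rw [sum_sg_dot z.1 hz1, zero_mul]
  · rw [sum_sg_dot z.2 hz2, mul_zero]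

lemma addself {h : ℕ} (x : F2v h) : x + x = 0 := by
  ext i <;> simp [CharTwo.add_self_eq_zero]

lemma add_eq_zero_iff_fv {h : ℕ} (x x' : F2v h) : x + x' = 0 ↔ x = x' := by
  constructor
  · intro hxx
    have := congrArg (· + x') hxx
    simpa [add_assoc, addself, zero_add, add_zero] using this
  · rintro rfl; exact addself x

def Sv {h : ℕ} (μ : F2v h → ℝ) (v : F2v h) : ℝ := ∑ x, μ x * sg (ipPair x v)

lemma parseval {h : ℕ} (μ : F2v h → ℝ) :
    ∑ v : F2v h, (Sv μ v) ^ 2 = (Fintype.card (F2v h) : ℝ) * ∑ x : F2v h, (μ x) ^ 2 := by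
  unfold Sv
  have step1 : ∀ v : F2v h, (∑ x : F2v h, μ x * sg (ipPair x v)) ^ 2
      = ∑ x : F2v h, ∑ x' : F2v h, μ x * μ x' * sg (ipPair (x + x') v) := by
    intro v
    rw [sq, Finset.sum_mul_sum]
    refine Finset.sum_congr rfl fun x _ => Finset.sum_congr rfl fun x' _ => ?_
    rw [ipPair_add_left, sg_add]; ring
  simp_rw [step1]
  rw [Finset.sum_comm]
  have step2 : ∀ x : F2v h, ∑ v : F2v h, ∑ x' : F2v h, μ x * μ x' * sg (ipPair (x + x') v)
      = (Fintype.card (F2v h) : ℝ) * (μ x) ^ 2 := by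
    intro x
    rw [Finset.sum_comm]
    have inner : ∀ x' : F2v h, ∑ v : F2v h, μ x * μ x' * sg (ipPair (x + x') v)
        = if x' = x then (Fintype.card (F2v h) : ℝ) * (μ x)^2 else 0 := by
      intro x'
      rw [← Finset.mul_sum]
      by_cases hx : x' = x
      · subst hx
        have e0 : ∀ v : F2v h, sg (ipPair (x' + x') v) = 1 := by
          intro v; rw [addself]
          simp [ipPair, sg]
        simp_rw [e0]
        simp [sq, Finset.card_univ]
        ring
      · rw [sum_sg_ipPair _ (by
            rw [Ne, add_eq_zero_iff_fv]
            exact fun hc => hx hc.symm), mul_zero, if_neg hx]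
    simp_rw [inner]
    simp
  simp_rw [step2]
  rw [← Finset.mul_sum]

lemma quad_key {K : Type} [Field K] (h2 : (2:K) = 0) {u1 v1 u2 v2 : K}
    (hne1 : u1 ≠ v1) (hu : u1 ≠ u2)
    (hs : u1 + v1 = u2 + v2) (ht : u1^3 + v1^3 = u2^3 + v2^3) : u2 = v1 := by
  have hv2 : v2 = u1 + v1 + u2 := by linear_combination -hs - u2 * h2
  subst hv2
  have key : (u1+v1)*(u1+u2)*(u2+v1) = 0 := by
    linear_combination ht + (2*u1^2*u2 + 2*u1^2*v1 + 2*u1*u2^2 + 4*u1*v1*u2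
      + 2*u1*v1^2 + 2*v1*u2^2 + 2*v1^2*u2 + u2^3) * h2
  have h1 : u1 + v1 ≠ 0 := fun hc => hne1 (by linear_combination hc - v1 * h2)
  have h2' : u1 + u2 ≠ 0 := fun hc => hu (by linear_combination hc - u2 * h2)
  have h3 : u2 + v1 = 0 := by
    rcases mul_eq_zero.1 key with hk | hk
    · rcases mul_eq_zero.1 hk with hk' | hk'
      · exact absurd hk' h1
      · exact absurd hk' h2'
    · exact hk
  linear_combination h3 - v1 * h2

lemma sum_comp_le_inj {Y : Type} [Fintype Y] {h : ℕ} (g : F2v h → ℝ) (hg : ∀ v, 0 ≤ g v)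
    (E : Y → F2v h) (hE : Function.Injective E) :
    ∑ y : Y, g (E y) ≤ ∑ v : F2v h, g v := by
  rw [← Finset.sum_image (fun y _ y' _ hyy => hE hyy)]
  exact Finset.sum_le_sum_of_subset_of_nonneg (Finset.subset_univ _)
    (fun v _ _ => hg v)

lemma sum_comp_le_two {Y : Type} [Fintype Y] {h : ℕ} (g : F2v h → ℝ) (hg : ∀ v, 0 ≤ g v)
    (Φ : Y → F2v h) (hfib : ∀ v, (univ.filter fun y => Φ y = v).card ≤ 2) :
    ∑ y : Y, g (Φ y) ≤ 2 * ∑ v : F2v h, g v := by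
  rw [← Finset.sum_fiberwise univ Φ (fun y => g (Φ y))]
  rw [Finset.mul_sum]
  refine Finset.sum_le_sum fun v _ => ?_
  have e : ∀ y ∈ univ.filter fun y => Φ y = v, g (Φ y) = g v := by
    intro y hy
    rw [(Finset.mem_filter.1 hy).2]
  rw [Finset.sum_congr rfl e, Finset.sum_const, nsmul_eq_mul]
  have h2 : ((univ.filter fun y => Φ y = v).card : ℝ) ≤ 2 := by exact_mod_cast hfib v
  nlinarith [hg v]

lemma sum_sq_le_ent {α : Type} [Fintype α] (μ : α → ℝ) (k : ℝ)
    (hμ0 : ∀ x, 0 ≤ μ x) (hμ1 : ∑ x, μ x = 1) (hk : ∀ x, μ x ≤ (2:ℝ) ^ (-k)) :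
    ∑ x, (μ x) ^ 2 ≤ (2:ℝ) ^ (-k) := by
  calc ∑ x, (μ x) ^ 2 ≤ ∑ x, (2:ℝ) ^ (-k) * μ x := by
        refine Finset.sum_le_sum fun x _ => ?_
        rw [sq]
        exact mul_le_mul_of_nonneg_right (hk x) (hμ0 x)
    _ = (2:ℝ) ^ (-k) := by rw [← Finset.mul_sum, hμ1, mul_one]

lemma abs_le_half_add (a t : ℝ) (ht : 0 < t) : |a| ≤ t / 2 + a ^ 2 / (2 * t) := by
  have h1 : 0 ≤ (|a| - t) ^ 2 := sq_nonneg _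
  have h2 : a ^ 2 = |a| ^ 2 := (sq_abs a).symm
  rw [h2]
  rw [div_add_div _ _ (by norm_num) (by positivity), le_div_iff₀ (by positivity)]
  nlinarith [abs_nonneg a]

section StepA
variable {h : ℕ} {Y : Type} [Fintype Y]
variable (μ : F2v h → ℝ) (Enc : Y → F2v h) (A : Y → Y)

lemma stepA :
    SD (pushD (fun xy : F2v h × Y => (ipPair xy.1 (Enc xy.2), ipPair xy.1 (Enc (A xy.2)), xy.2))
          (prodD μ (uniformD Y)))
       (prodD (uniformD (ZMod 2))
          (pushD (fun xy : F2v h × Y => (ipPair xy.1 (Enc (A xy.2)), xy.2))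
            (prodD μ (uniformD Y))))
    ≤ (1/2) * ∑ y : Y, (Fintype.card Y : ℝ)⁻¹ *
        (|Sv μ (Enc y)| + |Sv μ (Enc y + Enc (A y))|) := by
  set uY : ℝ := (Fintype.card Y : ℝ)⁻¹ with huY
  set P := pushD (fun xy : F2v h × Y => (ipPair xy.1 (Enc xy.2), ipPair xy.1 (Enc (A xy.2)), xy.2))
          (prodD μ (uniformD Y)) with hP
  set Q := prodD (uniformD (ZMod 2))
          (pushD (fun xy : F2v h × Y => (ipPair xy.1 (Enc (A xy.2)), xy.2))
            (prodD μ (uniformD Y))) with hQ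
  -- formula for P
  have hPf : ∀ a b y, P (a, b, y)
      = uY * ∑ x, (if ipPair x (Enc y) = a ∧ ipPair x (Enc (A y)) = b then μ x else 0) := by
    intro a b y
    rw [hP]
    unfold pushD prodD uniformD
    rw [Fintype.sum_prod_type, Finset.sum_comm]
    rw [Finset.sum_eq_single y]
    · rw [Finset.mul_sum]
      refine Finset.sum_congr rfl fun x _ => ?_
      by_cases hc : ipPair x (Enc y) = a ∧ ipPair x (Enc (A y)) = b
      · rw [if_pos (by simp [hc.1, hc.2]), if_pos hc]; ring
      · rw [if_neg (by simp [Prod.ext_iff]; tauto), if_neg hc, mul_zero]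
    · intro y' _ hy'
      apply Finset.sum_eq_zero
      intro x _
      rw [if_neg (by simp [Prod.ext_iff]; tauto)]
    · intro hy; exact absurd (Finset.mem_univ y) hy
  -- formula for Q
  have hQf : ∀ a b y, Q (a, b, y)
      = (2:ℝ)⁻¹ * (uY * ∑ x, (if ipPair x (Enc (A y)) = b then μ x else 0)) := by
    intro a b y
    have hrest : (pushD (fun xy : F2v h × Y => (ipPair xy.1 (Enc (A xy.2)), xy.2))
            (prodD μ (uniformD Y))) (b, y)
        = uY * ∑ x, (if ipPair x (Enc (A y)) = b then μ x else 0) := by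
      unfold pushD prodD uniformD
      rw [Fintype.sum_prod_type, Finset.sum_comm]
      rw [Finset.sum_eq_single y]
      · rw [Finset.mul_sum]
        refine Finset.sum_congr rfl fun x _ => ?_
        by_cases hc : ipPair x (Enc (A y)) = b
        · rw [if_pos (by simp [hc]), if_pos hc]; ring
        · rw [if_neg (by simp [Prod.ext_iff]; tauto), if_neg hc, mul_zero]
      · intro y' _ hy'
        apply Finset.sum_eq_zero
        intro x _
        rw [if_neg (by simp [Prod.ext_iff]; tauto)]
      · intro hy; exact absurd (Finset.mem_univ y) hy
    have hQform : Q (a, b, y) = uniformD (ZMod 2) a *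
        (pushD (fun xy : F2v h × Y => (ipPair xy.1 (Enc (A xy.2)), xy.2))
            (prodD μ (uniformD Y))) (b, y) := rfl
    rw [hQform, hrest]
    have e : uniformD (ZMod 2) a = (2:ℝ)⁻¹ := by
      unfold uniformD
      norm_num
    rw [e]
  have uY0 : 0 ≤ uY := by positivity
  -- pointwise indicator identity
  have ptws : ∀ (c d b : ZMod 2) (r : ℝ),
      ((if c = 0 ∧ d = b then r else 0) - (if c = 1 ∧ d = b then r else 0))
        = r * (sg c + sg b * (sg c * sg d)) / 2 := by
    intro c d b r
    rcases zmod2_cases c with hc | hc <;> rcases zmod2_cases d with hd | hd <;>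
      rcases zmod2_cases b with hb | hb <;> subst hc <;> subst hd <;> subst hb <;>
      norm_num [sg] <;> ring
  -- key per-seed bound
  have key : ∀ y : Y, (∑ b : ZMod 2, ∑ a : ZMod 2, |P (a, b, y) - Q (a, b, y)|)
      ≤ uY * (|Sv μ (Enc y)| + |Sv μ (Enc y + Enc (A y))|) := by
    intro y
    set v := Enc y with hv
    set w := Enc (A y) with hw
    set T : ZMod 2 → ZMod 2 → ℝ :=
      fun a b => ∑ x, (if ipPair x v = a ∧ ipPair x w = b then μ x else 0) with hT
    have hR : ∀ b, (∑ x, (if ipPair x w = b then μ x else 0)) = T 0 b + T 1 b := by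
      intro b
      rw [hT]
      simp only
      rw [← Finset.sum_add_distrib]
      refine Finset.sum_congr rfl fun x _ => ?_
      rcases zmod2_cases (ipPair x v) with hc | hc <;>
        rcases eq_or_ne (ipPair x w) b with hd | hd <;>
        simp [hc, hd]
    have hD : ∀ b, T 0 b - T 1 b
        = (Sv μ v + sg b * Sv μ (v + w)) / 2 := by
      intro b
      rw [hT]
      simp only
      rw [← Finset.sum_sub_distrib]
      have e : ∀ x : F2v h, ((if ipPair x v = 0 ∧ ipPair x w = b then μ x else 0)
            - (if ipPair x v = 1 ∧ ipPair x w = b then μ x else 0))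
          = μ x * sg (ipPair x v) / 2 + sg b * (μ x * sg (ipPair x (v + w))) / 2 := by
        intro x
        rw [ptws (ipPair x v) (ipPair x w) b (μ x), ipPair_add_right, sg_add]
        ring
      rw [Finset.sum_congr rfl fun x _ => e x, Finset.sum_add_distrib]
      unfold Sv
      rw [← Finset.sum_div]
      have e2 : (∑ x : F2v h, sg b * (μ x * sg (ipPair x (v + w))) / 2)
          = sg b * (∑ x : F2v h, μ x * sg (ipPair x (v + w))) / 2 := by
        rw [Finset.mul_sum, Finset.sum_div]
      rw [e2]
      ring
    have hsum_a : ∀ b, (∑ a : ZMod 2, |P (a, b, y) - Q (a, b, y)|)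
        = uY * |T 0 b - T 1 b| := by
      intro b
      rw [sum_zmod2 (fun a => |P (a, b, y) - Q (a, b, y)|)]
      rw [hPf 0 b y, hPf 1 b y, hQf 0 b y, hQf 1 b y, hR b]
      have e0 : uY * T 0 b - 2⁻¹ * (uY * (T 0 b + T 1 b)) = uY * (T 0 b - T 1 b) / 2 := by ring
      have e1 : uY * T 1 b - 2⁻¹ * (uY * (T 0 b + T 1 b)) = -(uY * (T 0 b - T 1 b) / 2) := by ring
      rw [e0, e1, abs_neg]
      rw [abs_div, abs_mul, abs_of_nonneg uY0]
      norm_num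
      try ring
    calc (∑ b : ZMod 2, ∑ a : ZMod 2, |P (a, b, y) - Q (a, b, y)|)
        = ∑ b : ZMod 2, uY * |T 0 b - T 1 b| := Finset.sum_congr rfl fun b _ => hsum_a b
      _ = uY * (|(Sv μ v + Sv μ (v + w)) / 2| + |(Sv μ v - Sv μ (v + w)) / 2|) := by
          rw [sum_zmod2 (fun b => uY * |T 0 b - T 1 b|), hD 0, hD 1, ← mul_add]
          rw [show sg 0 = (1:ℝ) from rfl, show sg 1 = (-1:ℝ) from rfl, one_mul,
            neg_one_mul, ← sub_eq_add_neg]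
      _ ≤ uY * (|Sv μ v| + |Sv μ (v + w)|) := by
          apply mul_le_mul_of_nonneg_left _ uY0
          rw [abs_div, abs_div]
          have h1 : |Sv μ v + Sv μ (v + w)| ≤ |Sv μ v| + |Sv μ (v + w)| := abs_add_le _ _
          have h2 : |Sv μ v - Sv μ (v + w)| ≤ |Sv μ v| + |Sv μ (v + w)| := abs_sub _ _
          norm_num
          linarith
  -- assemble
  have hsd : SD P Q = (∑ z : ZMod 2 × ZMod 2 × Y, |P z - Q z|) / 2 := rfl
  rw [hsd]
  have hre : (∑ z : ZMod 2 × ZMod 2 × Y, |P z - Q z|)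
      = ∑ y : Y, ∑ b : ZMod 2, ∑ a : ZMod 2, |P (a, b, y) - Q (a, b, y)| := by
    rw [Fintype.sum_prod_type]
    simp_rw [Fintype.sum_prod_type]
    have e1 : ∑ a : ZMod 2, ∑ b : ZMod 2, ∑ y : Y, |P (a, b, y) - Q (a, b, y)|
        = ∑ b : ZMod 2, ∑ a : ZMod 2, ∑ y : Y, |P (a, b, y) - Q (a, b, y)| :=
      Finset.sum_comm
    have e2 : ∑ b : ZMod 2, ∑ a : ZMod 2, ∑ y : Y, |P (a, b, y) - Q (a, b, y)|
        = ∑ b : ZMod 2, ∑ y : Y, ∑ a : ZMod 2, |P (a, b, y) - Q (a, b, y)| :=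
      Finset.sum_congr rfl fun b _ => Finset.sum_comm
    have e3 : ∑ b : ZMod 2, ∑ y : Y, ∑ a : ZMod 2, |P (a, b, y) - Q (a, b, y)|
        = ∑ y : Y, ∑ b : ZMod 2, ∑ a : ZMod 2, |P (a, b, y) - Q (a, b, y)| :=
      Finset.sum_comm
    exact e1.trans (e2.trans e3)
  rw [hre]
  have hle : (∑ y : Y, ∑ b : ZMod 2, ∑ a : ZMod 2, |P (a, b, y) - Q (a, b, y)|)
      ≤ ∑ y : Y, uY * (|Sv μ (Enc y)| + |Sv μ (Enc y + Enc (A y))|) :=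
    Finset.sum_le_sum fun y _ => key y
  linarith

end StepA

lemma main_bound {h : ℕ} {Y : Type} [Fintype Y] [Nonempty Y]
    (μ : F2v h → ℝ) (hμ0 : ∀ x, 0 ≤ μ x) (hμ1 : ∑ x, μ x = 1)
    (k : ℝ) (hk : ∀ x, μ x ≤ (2:ℝ) ^ (-k))
    (Enc : Y → F2v h) (hE : Function.Injective Enc) (A : Y → Y)
    (hfib : ∀ v, (univ.filter fun y => Enc y + Enc (A y) = v).card ≤ 2)
    (t : ℝ) (ht : 0 < t) :
    SD (pushD (fun xy : F2v h × Y => (ipPair xy.1 (Enc xy.2), ipPair xy.1 (Enc (A xy.2)), xy.2))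
          (prodD μ (uniformD Y)))
       (prodD (uniformD (ZMod 2))
          (pushD (fun xy : F2v h × Y => (ipPair xy.1 (Enc (A xy.2)), xy.2))
            (prodD μ (uniformD Y))))
      ≤ t / 2 + ((Fintype.card Y : ℝ)⁻¹ *
          ((Fintype.card (F2v h) : ℝ) * (2:ℝ) ^ (-k))) / t := by
  set uY : ℝ := (Fintype.card Y : ℝ)⁻¹ with huY
  have hY0 : (0:ℝ) < (Fintype.card Y : ℝ) := by exact_mod_cast Fintype.card_pos
  have uY0 : 0 ≤ uY := by positivity
  set C : ℝ := (Fintype.card (F2v h) : ℝ) * (2:ℝ) ^ (-k) with hC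
  have hSsum : ∑ v : F2v h, (Sv μ v) ^ 2 ≤ C := by
    rw [parseval, hC]
    exact mul_le_mul_of_nonneg_left (sum_sq_le_ent μ k hμ0 hμ1 hk)
      (by positivity)
  have genkey : ∀ (w : Y → F2v h), (∑ y : Y, (Sv μ (w y))^2) ≤ 2 * C →
      ∑ y : Y, uY * |Sv μ (w y)| ≤ t / 2 + uY * (2 * C) / (2 * t) := by
    intro w hw
    calc ∑ y : Y, uY * |Sv μ (w y)|
        ≤ ∑ y : Y, uY * (t / 2 + (Sv μ (w y))^2 / (2 * t)) :=
          Finset.sum_le_sum fun y _ =>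
            mul_le_mul_of_nonneg_left (abs_le_half_add _ t ht) uY0
      _ = uY * (Fintype.card Y : ℝ) * (t / 2)
            + uY * ((∑ y : Y, (Sv μ (w y))^2) / (2 * t)) := by
          simp_rw [mul_add]
          rw [Finset.sum_add_distrib, Finset.sum_const, Finset.card_univ, nsmul_eq_mul]
          congr 1
          · ring
          · rw [← Finset.mul_sum, ← Finset.sum_div]
      _ ≤ t / 2 + uY * (2 * C) / (2 * t) := by
          have e : uY * (Fintype.card Y : ℝ) * (t / 2) = t / 2 := by
            rw [huY, inv_mul_cancel₀ (ne_of_gt hY0), one_mul]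
          rw [e]
          have h5 : uY * ((∑ y : Y, (Sv μ (w y))^2) / (2 * t)) ≤ uY * (2 * C) / (2 * t) := by
            rw [mul_div_assoc]
            exact mul_le_mul_of_nonneg_left
              ((div_le_div_iff_of_pos_right (by positivity)).mpr hw) uY0
          linarith
  have hC0 : 0 ≤ C := by
    rw [hC]; positivity
  have hk1 : ∑ y : Y, (Sv μ (Enc y))^2 ≤ 2 * C :=
    le_trans (sum_comp_le_inj _ (fun v => sq_nonneg _) Enc hE) (by linarith)
  have hk2 : ∑ y : Y, (Sv μ (Enc y + Enc (A y)))^2 ≤ 2 * C :=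
    le_trans (sum_comp_le_two (fun v => (Sv μ v)^2) (fun v => sq_nonneg _)
      (fun y => Enc y + Enc (A y)) hfib) (by linarith)
  have hA1 := genkey Enc hk1
  have hA2 := genkey (fun y => Enc y + Enc (A y)) hk2
  refine le_trans (stepA μ Enc A) ?_
  have split : (∑ y : Y, uY * (|Sv μ (Enc y)| + |Sv μ (Enc y + Enc (A y))|))
      = (∑ y : Y, uY * |Sv μ (Enc y)|) + ∑ y : Y, uY * |Sv μ (Enc y + Enc (A y))| := by
    simp_rw [mul_add]
    rw [Finset.sum_add_distrib]
  rw [split]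
  have hfin : uY * (2 * C) / (2 * t) = uY * C / t := by
    field_simp
  rw [hfin] at hA1 hA2
  have hCt : 0 ≤ uY * C / t := by positivity
  calc (1/2) * ((∑ y : Y, uY * |Sv μ (Enc y)|) + ∑ y : Y, uY * |Sv μ (Enc y + Enc (A y))|)
      ≤ (1/2) * ((t / 2 + uY * C / t) + (t / 2 + uY * C / t)) := by
        apply mul_le_mul_of_nonneg_left _ (by norm_num)
        linarith
    _ = t / 2 + uY * C / t := by ring

/-- Here the even number `n` is written as `2*h`, `{0,1}^n` is represented
as `F_2^h × F_2^h`, `K` plays the role of `GF(2^{n/2}) = GF(2^h)` (any field of that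
cardinality), `e` is the fixed `F_2`-linear identification of `K` with `F_2^{n/2}`, and
`Enc(y) = (ι(y), ι(y)³)`. -/
theorem stmt_11 :
    ∃ c : ℝ, 0 < c ∧
      ∀ δ : ℝ, 0 < δ → δ < 1/2 →
        ∃ N : ℕ, ∀ h : ℕ, N ≤ 2 * h →
          ∀ (K : Type) [Field K] [Fintype K], Fintype.card K = 2 ^ h →
            ∀ ι : BS (h - 1) → K, Function.Injective ι → (∀ y, ι y ≠ 0) →
              ∀ e : K ≃+ (Fin h → ZMod 2),
                IsNME (fun (x : (Fin h → ZMod 2) × (Fin h → ZMod 2)) (y : BS (h - 1)) =>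
                    ipPair x (e (ι y), e (ι y ^ 3)))
                  ((1/2 + δ) * (2 * h)) ((2:ℝ) ^ (-(c * δ * (2 * h)))) := by
  refine ⟨1/4, by norm_num, ?_⟩
  intro δ hδ0 hδ12
  refine ⟨max 2 ⌈(8:ℝ)/δ⌉₊, ?_⟩
  intro h hN K _ _ hK ι hι hι0 e
  have h1 : 1 ≤ h := by
    have := le_trans (le_max_left 2 ⌈(8:ℝ)/δ⌉₊) hN
    omega
  have hδh : 4 ≤ δ * h := by
    have hceil : ⌈(8:ℝ)/δ⌉₊ ≤ 2*h := le_trans (le_max_right _ _) hN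
    have h8 : (8:ℝ)/δ ≤ ((2*h : ℕ) : ℝ) := le_trans (Nat.le_ceil _) (by exact_mod_cast hceil)
    rw [div_le_iff₀ hδ0] at h8
    push_cast at h8
    nlinarith
  -- characteristic 2
  have h2K : (2:K) = 0 := by
    have hcard0 : ((Fintype.card K : ℕ) : K) = 0 := Nat.cast_card_eq_zero K
    rw [hK] at hcard0
    push_cast at hcard0
    exact (pow_eq_zero_iff (by omega : h ≠ 0)).1 hcard0
  intro μX hdist hent A hA
  set EncF : BS (h-1) → F2v h := fun y => (e (ι y), e (ι y ^ 3)) with hEncF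
  have hEinj : Function.Injective EncF := by
    intro y y' hyy
    have : e (ι y) = e (ι y') := congrArg Prod.fst hyy
    exact hι (e.injective this)
  have hne : ∀ y : BS (h-1), ι y ≠ ι (A y) := by
    intro y hc
    exact hA y (hι hc).symm
  have hfib : ∀ v : F2v h,
      ((univ : Finset (BS (h-1))).filter fun y => EncF y + EncF (A y) = v).card ≤ 2 := by
    intro v
    by_contra hc
    push_neg at hc
    obtain ⟨y1, hy1, y2, hy2, y3, hy3, h12, h13, h23⟩ :=
      Finset.two_lt_card.1 hc
    have mem : ∀ y ∈ (univ : Finset (BS (h-1))).filter fun y => EncF y + EncF (A y) = v,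
        e (ι y + ι (A y)) = v.1 ∧ e (ι y ^ 3 + ι (A y) ^ 3) = v.2 := by
      intro y hy
      have hv := (Finset.mem_filter.1 hy).2
      rw [hEncF] at hv
      constructor
      · rw [map_add]; exact congrArg Prod.fst hv
      · rw [map_add]; exact congrArg Prod.snd hv
    have key : ∀ y y' : BS (h-1),
        y ∈ (univ : Finset (BS (h-1))).filter (fun y => EncF y + EncF (A y) = v) →
        y' ∈ (univ : Finset (BS (h-1))).filter (fun y => EncF y + EncF (A y) = v) →
        y ≠ y' → ι y' = ι (A y) := by
      intro y y' hy hy' hne'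
      have m1 := mem y hy
      have m2 := mem y' hy'
      have hs : ι y + ι (A y) = ι y' + ι (A y') :=
        e.injective (m1.1.trans m2.1.symm)
      have hT : ι y ^ 3 + ι (A y) ^ 3 = ι y' ^ 3 + ι (A y') ^ 3 :=
        e.injective (m1.2.trans m2.2.symm)
      exact quad_key h2K (hne y) (fun hcc => hne' (hι hcc)) hs hT
    have k2 : ι y2 = ι (A y1) := key y1 y2 hy1 hy2 h12
    have k3 : ι y3 = ι (A y1) := key y1 y3 hy1 hy3 h13
    exact h23 (hι (k2.trans k3.symm))
  set X : ℝ := (2:ℝ) ^ (-(δ * (h:ℝ))) with hX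
  have hXpos : 0 < X := Real.rpow_pos_of_pos two_pos _
  have hmb := main_bound μX hdist.1 hdist.2 _ hent EncF hEinj A hfib X hXpos
  refine le_trans hmb ?_
  -- numerics
  have hcardY : ((Fintype.card (BS (h-1)) : ℕ) : ℝ)⁻¹ = (2:ℝ) ^ ((1:ℝ) - (h:ℝ)) := by
    have e1 : Fintype.card (BS (h-1)) = 2 ^ (h-1) := by
      simp [BS]
    rw [e1]
    rw [show (((2:ℕ)^(h-1) : ℕ):ℝ) = (2:ℝ) ^ (((h-1:ℕ)):ℝ) by
      push_cast
      rw [Real.rpow_natCast]]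
    rw [← Real.rpow_neg (by norm_num)]
    congr 1
    rw [Nat.cast_sub h1]
    push_cast
    ring
  have hcardF : ((Fintype.card (F2v h) : ℕ) : ℝ) = (2:ℝ) ^ (2*(h:ℝ)) := by
    have e1 : Fintype.card (F2v h) = 2 ^ h * 2 ^ h := by
      simp [F2v]
    rw [e1]
    push_cast
    rw [show 2*(h:ℝ) = (h:ℝ) + (h:ℝ) by ring, Real.rpow_add two_pos,
      Real.rpow_natCast]
  rw [hcardY, hcardF]
  have hprod : (2:ℝ) ^ ((1:ℝ) - (h:ℝ)) *
      ((2:ℝ) ^ (2*(h:ℝ)) * (2:ℝ) ^ (-((1/2 + δ) * (2 * (h:ℝ)))))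
      = 2 * (X * X) := by
    rw [hX, ← Real.rpow_add two_pos, ← Real.rpow_add two_pos, ← Real.rpow_add two_pos]
    rw [show (1:ℝ) - (h:ℝ) + (2*(h:ℝ) + -((1/2+δ)*(2*(h:ℝ)))) = 1 + (-(δ*(h:ℝ)) + -(δ*(h:ℝ))) by ring]
    rw [Real.rpow_add two_pos, Real.rpow_one]
  rw [hprod]
  have hLHS : X / 2 + 2 * (X * X) / X = (5/2) * X := by
    field_simp
    ring
  rw [hLHS]
  have h4X : (5/2) * X ≤ 4 * X := by nlinarith
  refine le_trans h4X ?_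
  have h4 : 4 * X = (2:ℝ) ^ ((2:ℝ) - δ * (h:ℝ)) := by
    have h22 : (4:ℝ) = (2:ℝ) ^ (2:ℝ) := by norm_num
    rw [hX, h22, ← Real.rpow_add two_pos]
    congr 1
    try ring
  rw [h4]
  apply Real.rpow_le_rpow_left_iff (x := 2) one_lt_two |>.2
  nlinarith

end
end
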